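/- Let n ≥ 2 and 1 ≤ r < n be integers and let h be a homeomorphism of 𝔠_{n,r} with h⁻¹ G_{n,r} h ⊆ G_{n,r}. Then for all words ν, η with U_ν ∪ U_η ≠ 𝔠_{n,r}, h acts on U_ν and U_η almost in the same fashion: there exists k ∈ ℕ such that for every χ ∈ List (Fin n) with length at least k, h acts in the same fashion on U_{ν⌢χ} and U_{η⌢χ}. -/

import Mathlib

open Set

namespace HigmanAut

/-- The one-sided infinite sequence space `𝔠_n` on `n` letters. -/
abbrev Cn (n : ℕ) : Type := ℕ → Fin n

/-- The Cantor space `𝔠_{n,r} = Fin r × (ℕ → Fin n)` (with the product topology,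
`Fin r` and `Fin n` discrete). -/
abbrev CNR (n r : ℕ) : Type := Fin r × Cn n

/-- A word: a letter from `Fin r` together with a finite list over `Fin n`. -/
abbrev Word (n r : ℕ) : Type := Fin r × List (Fin n)

/-- Self-homeomorphisms of `𝔠_{n,r}`. -/
abbrev Homeo (n r : ℕ) : Type := CNR n r ≃ₜ CNR n r

/-- Append a finite list to a word: `ν⌢w`. -/
def wApp {n r : ℕ} (ν : Word n r) (w : List (Fin n)) : Word n r := (ν.1, ν.2 ++ w)

/-- The point `ν⌢x` of `𝔠_{n,r}` determined by a word `ν` followed by `x ∈ 𝔠_n`. -/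
def wCat {n r : ℕ} (ν : Word n r) (x : Cn n) : CNR n r :=
  (ν.1, fun i => if h : i < ν.2.length then ν.2.get ⟨i, h⟩ else x (i - ν.2.length))

/-- The cone `U_ν` of a word `ν`. -/
def cone {n r : ℕ} (ν : Word n r) : Set (CNR n r) :=
  {p | p.1 = ν.1 ∧ ∀ (i : ℕ) (h : i < ν.2.length), p.2 i = ν.2.get ⟨i, h⟩}

/-- Membership in the Higman--Thompson group `G_{n,r}`: `g` is a prefix code map,
i.e. there are `k ≥ 1` and words `ν i`, `η i` whose cones partition `𝔠_{n,r}`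
with `g(ν i ⌢ x) = η i ⌢ x` for all `i`, `x`. -/
def IsHigman {n r : ℕ} (g : Homeo n r) : Prop :=
  ∃ k : ℕ, 0 < k ∧ ∃ ν η : Fin k → Word n r,
    (∀ p : CNR n r, ∃! i : Fin k, p ∈ cone (ν i)) ∧
    (∀ p : CNR n r, ∃! i : Fin k, p ∈ cone (η i)) ∧
    (∀ (i : Fin k) (x : Cn n), g (wCat (ν i) x) = wCat (η i) x)

/-- The Higman--Thompson group `G_{n,r}` as a set of homeomorphisms. -/
def higmanSet (n r : ℕ) : Set (Homeo n r) := {g | IsHigman g}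

/-- Conjugation: in the paper's right-action notation this is `g ↦ h⁻¹ g h`
(as a left function, `x ↦ h (g (h⁻¹ x))`). -/
def conjH {n r : ℕ} (h g : Homeo n r) : Homeo n r := (h.symm.trans g).trans h

/-- `h` acts in the same fashion on `U_α` and `U_β`: there are words `α'`, `β'`
and a common local action `f` with `h(α⌢x) = α'⌢f(x)` and `h(β⌢x) = β'⌢f(x)`. -/
def SameFashion {n r : ℕ} (h : Homeo n r) (α β : Word n r) : Prop :=
  ∃ (α' β' : Word n r) (f : Cn n → Cn n),
    (∀ x : Cn n, h (wCat α x) = wCat α' (f x)) ∧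
    (∀ x : Cn n, h (wCat β x) = wCat β' (f x))

/-- Tail equivalence on `𝔠_{n,r}`. -/
def TailEq {n r : ℕ} (x y : CNR n r) : Prop :=
  ∃ (ν η : Word n r) (z : Cn n), x = wCat ν z ∧ y = wCat η z

/-- `h` is pointwise canonical. -/
def PtwiseCanonical {n r : ℕ} (h : Homeo n r) : Prop :=
  ∀ x : CNR n r, ∃ (η₁ η₂ : Word n r) (y : Cn n), x = wCat η₁ y ∧ h x = wCat η₂ y

/-- `h` is densely canonical. -/
def DenselyCanonical {n r : ℕ} (h : Homeo n r) : Prop :=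
  ∀ U : Set (CNR n r), IsOpen U → U.Nonempty →
    ∃ η ζ : Word n r, cone η ⊆ U ∧ ∀ x : Cn n, h (wCat η x) = wCat ζ x

/-- `h` belongs to `H_{n,r,∼}`: `x ∼ y` iff `h(x) ∼ h(y)`. -/
def PreservesTailEq {n r : ℕ} (h : Homeo n r) : Prop :=
  ∀ x y : CNR n r, TailEq x y ↔ TailEq (h x) (h y)

/-- `ν` is a prefix of `η`, i.e. `U_η ⊆ U_ν`. -/
def WPrefix {n r : ℕ} (ν η : Word n r) : Prop := cone η ⊆ cone ν

/-- Two words are incomparable if neither is a prefix of the other. -/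
def Incomp {n r : ℕ} (ν η : Word n r) : Prop := ¬ WPrefix ν η ∧ ¬ WPrefix η ν

section Aux

variable {n r : ℕ}

/-- `pad w x` : the sequence `w` followed by `x`. -/
def pad (w : List (Fin n)) (x : Cn n) : Cn n :=
  fun i => if h : i < w.length then w.get ⟨i, h⟩ else x (i - w.length)

lemma wCat_def (ν : Word n r) (x : Cn n) : wCat ν x = (ν.1, pad ν.2 x) := rfl

lemma pad_lt {w : List (Fin n)} {x : Cn n} {i : ℕ} (h : i < w.length) :
    pad w x i = w.get ⟨i, h⟩ := dif_pos h

lemma pad_ge {w : List (Fin n)} {x : Cn n} {i : ℕ} (h : w.length ≤ i) :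
    pad w x i = x (i - w.length) := dif_neg (by omega)

lemma pad_add (w : List (Fin n)) (x : Cn n) (j : ℕ) :
    pad w x (j + w.length) = x j := by
  rw [pad_ge (by omega)]; congr 1; omega

lemma pad_append (u w : List (Fin n)) (x : Cn n) :
    pad (u ++ w) x = pad u (pad w x) := by
  funext i
  rcases lt_or_ge i u.length with hi | hi
  · rw [pad_lt (x := x) (by rw [List.length_append]; omega), pad_lt hi]
    simp [List.get_eq_getElem, List.getElem_append_left hi]
  · rw [pad_ge hi]
    rcases lt_or_ge i (u.length + w.length) with hi2 | hi2
    · rw [pad_lt (x := x) (by rw [List.length_append]; omega),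
        pad_lt (show i - u.length < w.length by omega)]
      simp [List.get_eq_getElem]
      rw [List.getElem_append_right hi]
    · rw [pad_ge (x := x) (by rw [List.length_append]; omega),
        pad_ge (show w.length ≤ i - u.length by omega)]
      congr 1; rw [List.length_append]; omega

lemma wCat_wApp (ν : Word n r) (w : List (Fin n)) (x : Cn n) :
    wCat (wApp ν w) x = wCat ν (pad w x) := by
  rw [wCat_def, wCat_def, wApp]
  exact Prod.ext rfl (pad_append ν.2 w x)

/-- tail after dropping `m` coordinates -/
def tl (m : ℕ) (x : Cn n) : Cn n := fun i => x (i + m)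

lemma tl_pad (w : List (Fin n)) (x : Cn n) : tl w.length (pad w x) = x :=
  funext fun j => pad_add w x j

lemma wCat_mem_cone (μ : Word n r) (x : Cn n) : wCat μ x ∈ cone μ :=
  ⟨rfl, fun i h => pad_lt h⟩

lemma eq_wCat_of_mem_cone {μ : Word n r} {p : CNR n r} (hp : p ∈ cone μ) :
    p = wCat μ (tl μ.2.length p.2) := by
  rw [wCat_def]
  refine Prod.ext hp.1 (funext fun i => ?_)
  show p.2 i = pad μ.2 (tl μ.2.length p.2) i
  rcases lt_or_ge i μ.2.length with hi | hi
  · rw [pad_lt hi]; exact hp.2 i hi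
  · rw [pad_ge hi]
    show p.2 i = p.2 (i - μ.2.length + μ.2.length)
    rw [Nat.sub_add_cancel hi]

lemma cone_subset_of_mem {α β : Word n r} {q : CNR n r} (hqa : q ∈ cone α)
    (hqb : q ∈ cone β) (hlen : β.2.length ≤ α.2.length) : cone α ⊆ cone β := by
  intro p hp
  refine ⟨hp.1.trans (hqa.1.symm.trans hqb.1), fun i h => ?_⟩
  rw [hp.2 i (by omega), ← hqa.2 i (by omega), hqb.2 i h]

lemma pad_cancel {a b : List (Fin n)} (hab : a.length ≤ b.length) {y z : Cn n}
    (hyz : pad a y = pad b z) : y = pad (b.drop a.length) z := by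
  funext j
  have h1 : y j = pad b z (j + a.length) := by
    rw [← hyz, pad_add]
  rw [h1]
  rcases lt_or_ge (j + a.length) b.length with hj | hj
  · rw [pad_lt hj, pad_lt (x := z) (show j < (b.drop a.length).length by
      rw [List.length_drop]; omega)]
    simp [List.get_eq_getElem, List.getElem_drop]
    congr 1; omega
  · rw [pad_ge hj, pad_ge (x := z) (show (b.drop a.length).length ≤ j by
      rw [List.length_drop]; omega)]
    congr 1; rw [List.length_drop]; omega


lemma mem_cone_iff_lists {μ : Word n r} {p : CNR n r} :
    p ∈ cone μ ↔ (p.1 = μ.1 ∧ (fun j : Fin μ.2.length => p.2 j) = fun j => μ.2.get j) := by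
  constructor
  · rintro ⟨h1, h2⟩
    exact ⟨h1, funext fun j => h2 j j.2⟩
  · rintro ⟨h1, h2⟩
    exact ⟨h1, fun i h => congrFun h2 ⟨i, h⟩⟩

lemma isClopen_cone (μ : Word n r) : IsClopen (cone μ) := by
  have hc : Continuous (fun p : CNR n r => ((p.1, fun j : Fin μ.2.length => p.2 j) :
      Fin r × (Fin μ.2.length → Fin n))) :=
    continuous_fst.prodMk (continuous_pi fun j => (continuous_apply (j : ℕ)).comp continuous_snd)
  have : cone μ = (fun p : CNR n r => ((p.1, fun j : Fin μ.2.length => p.2 j) :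
      Fin r × (Fin μ.2.length → Fin n))) ⁻¹' {(μ.1, fun j => μ.2.get j)} := by
    ext p
    simp only [mem_preimage, mem_singleton_iff, Prod.ext_iff]
    exact mem_cone_iff_lists
  rw [this]
  exact (isClopen_discrete _).preimage hc

/-- the basic cone of `p` at level `L` -/
def cw (p : CNR n r) (L : ℕ) : Word n r := (p.1, List.ofFn fun j : Fin L => p.2 j)

lemma cw_len (p : CNR n r) (L : ℕ) : (cw p L).2.length = L := by simp [cw]

lemma mem_cone_cw_iff {p q : CNR n r} {L : ℕ} :
    q ∈ cone (cw p L) ↔ (q.1 = p.1 ∧ ∀ i < L, q.2 i = p.2 i) := by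
  unfold cone cw
  simp [List.get_ofFn]

lemma self_mem_cone_cw (p : CNR n r) (L : ℕ) : p ∈ cone (cw p L) :=
  mem_cone_cw_iff.2 ⟨rfl, fun _ _ => rfl⟩

lemma wCat_mem_cone_iff {μ τ : Word n r} (hlen : μ.2.length ≤ τ.2.length) (x : Cn n) :
    wCat τ x ∈ cone μ ↔ (μ.1 = τ.1 ∧ μ.2 <+: τ.2) := by
  constructor
  · rintro ⟨h1, h2⟩
    refine ⟨h1.symm, τ.2.drop μ.2.length, ?_⟩
    apply List.ext_getElem
    · rw [List.length_append, List.length_drop]; omega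
    · intro i hi hi2
      rcases lt_or_ge i μ.2.length with hil | hil
      · rw [List.getElem_append_left hil]
        have := h2 i hil
        rw [wCat_def] at this
        simp only at this
        rw [pad_lt (show i < τ.2.length by omega)] at this
        simpa [List.get_eq_getElem] using this.symm
      · rw [List.getElem_append_right hil]
        rw [List.getElem_drop]
        congr 1
        rw [List.length_append] at hi; omega
  · rintro ⟨h1, w, hw⟩
    refine ⟨h1.symm, fun i hi => ?_⟩
    rw [wCat_def]
    show pad τ.2 x i = _
    rw [← hw, pad_append, pad_lt hi]

/-- The swap map of two (disjoint) cones. -/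
noncomputable def swapFun (ν γ : Word n r) : CNR n r → CNR n r :=
  letI := Classical.dec
  (cone ν).piecewise (fun p => wCat γ (tl ν.2.length p.2))
    ((cone γ).piecewise (fun p => wCat ν (tl γ.2.length p.2)) id)

lemma swapFun_of_mem_left {ν γ : Word n r} {p : CNR n r} (hp : p ∈ cone ν) :
    swapFun ν γ p = wCat γ (tl ν.2.length p.2) := by
  classical
  simp [swapFun, Set.piecewise_eq_of_mem _ _ _ hp]

lemma swapFun_of_mem_right {ν γ : Word n r} {p : CNR n r} (hp1 : p ∉ cone ν)
    (hp2 : p ∈ cone γ) : swapFun ν γ p = wCat ν (tl γ.2.length p.2) := by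
  classical
  simp [swapFun, Set.piecewise_eq_of_notMem _ _ _ hp1, Set.piecewise_eq_of_mem _ _ _ hp2]

lemma swapFun_of_not_mem {ν γ : Word n r} {p : CNR n r} (hp1 : p ∉ cone ν)
    (hp2 : p ∉ cone γ) : swapFun ν γ p = p := by
  classical
  simp [swapFun, Set.piecewise_eq_of_notMem _ _ _ hp1, Set.piecewise_eq_of_notMem _ _ _ hp2]

lemma swapFun_wCat_left {ν γ : Word n r} (x : Cn n) :
    swapFun ν γ (wCat ν x) = wCat γ x := by
  rw [swapFun_of_mem_left (wCat_mem_cone ν x), wCat_def]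
  show wCat γ (tl ν.2.length (pad ν.2 x)) = _
  rw [tl_pad]

lemma swapFun_wCat_right {ν γ : Word n r} (hd : ∀ p : CNR n r, p ∈ cone ν → p ∉ cone γ)
    (x : Cn n) : swapFun ν γ (wCat γ x) = wCat ν x := by
  have h1 : wCat γ x ∉ cone ν := fun hmem => hd _ hmem (wCat_mem_cone γ x)
  rw [swapFun_of_mem_right h1 (wCat_mem_cone γ x), wCat_def]
  show wCat ν (tl γ.2.length (pad γ.2 x)) = _
  rw [tl_pad]

lemma swapFun_invol {ν γ : Word n r} (hd : ∀ p : CNR n r, p ∈ cone ν → p ∉ cone γ)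
    (p : CNR n r) : swapFun ν γ (swapFun ν γ p) = p := by
  classical
  by_cases h1 : p ∈ cone ν
  · rw [eq_wCat_of_mem_cone h1, swapFun_wCat_left, swapFun_wCat_right hd]
  · by_cases h2 : p ∈ cone γ
    · rw [eq_wCat_of_mem_cone h2, swapFun_wCat_right hd, swapFun_wCat_left]
    · rw [swapFun_of_not_mem h1 h2, swapFun_of_not_mem h1 h2]

lemma continuous_wCat_tl (μ : Word n r) (m : ℕ) :
    Continuous (fun p : CNR n r => wCat μ (tl m p.2)) := by
  simp only [wCat_def]
  refine continuous_const.prodMk (continuous_pi fun i => ?_)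
  show Continuous fun p : CNR n r => pad μ.2 (tl m p.2) i
  unfold pad tl
  split_ifs with hi
  · exact continuous_const
  · exact (continuous_apply _).comp continuous_snd

lemma continuous_swapFun (ν γ : Word n r) : Continuous (swapFun ν γ) := by
  classical
  unfold swapFun
  refine Continuous.piecewise ?_ (continuous_wCat_tl γ ν.2.length) ?_
  · rw [(isClopen_cone ν).frontier_eq]
    intro a ha; exact absurd ha (notMem_empty a)
  refine Continuous.piecewise ?_ (continuous_wCat_tl ν γ.2.length) continuous_id
  · rw [(isClopen_cone γ).frontier_eq]
    intro a ha; exact absurd ha (notMem_empty a)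

/-- The swap homeomorphism. -/
noncomputable def swapHomeo (ν γ : Word n r) (hd : ∀ p : CNR n r, p ∈ cone ν → p ∉ cone γ) :
    Homeo n r where
  toFun := swapFun ν γ
  invFun := swapFun ν γ
  left_inv := swapFun_invol hd
  right_inv := swapFun_invol hd
  continuous_toFun := continuous_swapFun ν γ
  continuous_invFun := continuous_swapFun ν γ

lemma swapHomeo_apply (ν γ : Word n r) (hd : ∀ p : CNR n r, p ∈ cone ν → p ∉ cone γ)
    (p : CNR n r) : swapHomeo ν γ hd p = swapFun ν γ p := rfl


/-- transfer a partition through a homeomorphism acting by prefix substitution -/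
lemma partition_image (g : Homeo n r) {k : ℕ} (νs ηs : Fin k → Word n r)
    (hν : ∀ p : CNR n r, ∃! i, p ∈ cone (νs i))
    (hg : ∀ (i : Fin k) (x : Cn n), g (wCat (νs i) x) = wCat (ηs i) x) :
    ∀ p : CNR n r, ∃! i, p ∈ cone (ηs i) := by
  intro p
  have key : ∀ i, (p ∈ cone (ηs i) ↔ g.symm p ∈ cone (νs i)) := by
    intro i
    constructor
    · intro hp
      set y := tl (ηs i).2.length p.2 with hy
      have h1 : p = wCat (ηs i) y := eq_wCat_of_mem_cone hp
      have h2 : g.symm p = wCat (νs i) y := by rw [h1, ← hg i, g.symm_apply_apply]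
      rw [h2]; exact wCat_mem_cone _ _
    · intro hp
      set y := tl (νs i).2.length (g.symm p).2 with hy
      have h1 : g.symm p = wCat (νs i) y := eq_wCat_of_mem_cone hp
      have h2 : p = wCat (ηs i) y := by rw [← hg i, ← h1, g.apply_symm_apply]
      rw [h2]; exact wCat_mem_cone _ _
  obtain ⟨i, hi, hiu⟩ := hν (g.symm p)
  exact ⟨i, (key i).2 hi, fun j hj => hiu j ((key j).1 hj)⟩

/-- existence part of uniform continuity: a single level `m` beyond which every
cone is mapped by `h` into a single piece of the partition. -/
lemma exists_uniform (hn : 0 < n) (h : Homeo n r) {k : ℕ} (νs : Fin k → Word n r)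
    (hpart : ∀ p : CNR n r, ∃! i, p ∈ cone (νs i)) :
    ∃ m : ℕ, ∀ μ : Word n r, m ≤ μ.2.length → ∃ i, ∀ x : Cn n,
      h (wCat μ x) ∈ cone (νs i) := by
  classical
  have idx : ∀ p : CNR n r, ∃ i, p ∈ cone (νs i) := fun p => (hpart p).exists
  choose I hI using idx
  -- for each p there is a level L p with cone (cw p (L p)) ⊆ h ⁻¹' cone (νs (I (h p)))
  have step : ∀ p : CNR n r, ∃ L, cone (cw p L) ⊆ h ⁻¹' (cone (νs (I (h p)))) := by
    intro p
    have hdir : Directed (· ⊇ ·) (fun L => cone (cw p L)) := by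
      have mono : ∀ {L L' : ℕ}, L ≤ L' → cone (cw p L') ⊆ cone (cw p L) := by
        intro L L' hLL
        exact cone_subset_of_mem (self_mem_cone_cw p L') (self_mem_cone_cw p L)
          (by rw [cw_len, cw_len]; exact hLL)
      exact fun L L' => ⟨max L L', mono (le_max_left _ _), mono (le_max_right _ _)⟩
    have hcpt : ∀ L : ℕ, IsCompact (cone (cw p L)) :=
      fun L => (isClopen_cone _).isClosed.isCompact
    have hcl : ∀ L : ℕ, IsClosed (cone (cw p L)) := fun L => (isClopen_cone _).isClosed
    have hnhds : ∀ x ∈ ⋂ L : ℕ, cone (cw p L),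
        (h ⁻¹' (cone (νs (I (h p))))) ∈ nhds x := by
      intro x hx
      have hxp : x = p := by
        simp only [mem_iInter] at hx
        have h1 : x.1 = p.1 := (mem_cone_cw_iff.1 (hx 0)).1
        have h2 : x.2 = p.2 := funext fun i =>
          (mem_cone_cw_iff.1 (hx (i+1))).2 i (Nat.lt_succ_self i)
        exact Prod.ext h1 h2
      subst hxp
      exact ((isClopen_cone _).isOpen.preimage h.continuous).mem_nhds (hI (h x))
    exact exists_subset_nhds_of_isCompact' hdir hcpt hcl hnhds
  choose L hL using step
  obtain ⟨t, ht⟩ := isCompact_univ.elim_finite_subcover (fun p => cone (cw p (L p)))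
    (fun p => (isClopen_cone _).isOpen) (fun p _ => mem_iUnion.2 ⟨p, self_mem_cone_cw p (L p)⟩)
  refine ⟨t.sup L, fun μ hm => ?_⟩
  have hq : wCat μ (fun _ => ⟨0, hn⟩) ∈ ⋃ p ∈ t, cone (cw p (L p)) := ht (mem_univ _)
  simp only [mem_iUnion] at hq
  obtain ⟨p₀, hp₀t, hq₀⟩ := hq
  have hsub : cone μ ⊆ cone (cw p₀ (L p₀)) :=
    cone_subset_of_mem (wCat_mem_cone μ _) hq₀
      (by rw [cw_len]; exact le_trans (Finset.le_sup hp₀t) hm)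
  exact ⟨I (h p₀), fun x => hL p₀ (hsub (wCat_mem_cone μ x))⟩

/-- combining two one-sided same-fashion relations through a common cone -/
lemma sameFashion_of_common (h : Homeo n r) (α β A B C C' : Word n r) (f f' : Cn n → Cn n)
    (hA : ∀ x, h (wCat α x) = wCat A (f x)) (hB : ∀ x, h (wCat β x) = wCat B (f' x))
    (hCC : ∀ x, wCat C (f x) = wCat C' (f' x)) : SameFashion h α β := by
  have hsnd : ∀ x, pad C.2 (f x) = pad C'.2 (f' x) := by
    intro x
    have := congrArg Prod.snd (hCC x)
    rwa [wCat_def, wCat_def] at this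
  rcases le_total C.2.length C'.2.length with hle | hle
  · have key : ∀ x, f x = pad (C'.2.drop C.2.length) (f' x) :=
      fun x => pad_cancel hle (hsnd x)
    exact ⟨wApp A (C'.2.drop C.2.length), B, f',
      fun x => by rw [hA x, key x, ← wCat_wApp], hB⟩
  · have key : ∀ x, f' x = pad (C.2.drop C'.2.length) (f x) :=
      fun x => pad_cancel hle (hsnd x).symm
    exact ⟨A, wApp B (C.2.drop C'.2.length), f, hA,
      fun x => by rw [hB x, key x, ← wCat_wApp]⟩


lemma existsUnique_equiv {α β : Type*} (e : α ≃ β) {q : β → Prop} (H : ∃! b, q b) :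
    ∃! a, q (e a) := by
  obtain ⟨b, hb, hbu⟩ := H
  refine ⟨e.symm b, by simpa using hb, fun a ha => ?_⟩
  have := hbu _ ha
  rw [← this]; simp

/-- all words at level `L` -/
def lw {L : ℕ} (j : Fin r × (Fin L → Fin n)) : Word n r := (j.1, List.ofFn j.2)

lemma lw_len {L : ℕ} (j : Fin r × (Fin L → Fin n)) : (lw (n := n) (r := r) j).2.length = L := by
  simp [lw]

lemma mem_cone_lw {L : ℕ} {j : Fin r × (Fin L → Fin n)} {p : CNR n r} :
    p ∈ cone (lw j) ↔ (p.1 = j.1 ∧ ∀ a : Fin L, p.2 a = j.2 a) := by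
  constructor
  · rintro ⟨h1, h2⟩
    refine ⟨h1, fun a => ?_⟩
    have := h2 a (by simp [lw])
    simp only [lw, List.get_ofFn] at this
    exact this
  · rintro ⟨h1, h2⟩
    refine ⟨h1, fun i hi => ?_⟩
    have hi' : i < L := by simpa [lw] using hi
    simp only [lw] at hi ⊢
    rw [List.get_ofFn]
    exact (h2 ⟨i, hi'⟩).trans (by congr)

lemma lw_partition {L : ℕ} (p : CNR n r) :
    ∃! j : Fin r × (Fin L → Fin n), p ∈ cone (lw j) := by
  refine ⟨(p.1, fun a => p.2 a), mem_cone_lw.2 ⟨rfl, fun a => rfl⟩, ?_⟩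
  rintro ⟨c, w⟩ hw
  obtain ⟨h1, h2⟩ := mem_cone_lw.1 hw
  exact Prod.ext h1.symm (funext fun a => (h2 a).symm)

/-- words of the image partition under the swap map -/
def sw (ν γ : Word n r) {L : ℕ} (j : Fin r × (Fin L → Fin n)) : Word n r :=
  if ν.1 = (lw j).1 ∧ ν.2 <+: (lw j).2 then wApp γ ((lw j).2.drop ν.2.length)
  else if γ.1 = (lw j).1 ∧ γ.2 <+: (lw j).2 then wApp ν ((lw j).2.drop γ.2.length)
  else lw j

lemma swap_action (ν γ : Word n r) (hd : ∀ p : CNR n r, p ∈ cone ν → p ∉ cone γ)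
    {L : ℕ} (hνL : ν.2.length ≤ L) (hγL : γ.2.length ≤ L)
    (j : Fin r × (Fin L → Fin n)) (x : Cn n) :
    swapHomeo ν γ hd (wCat (lw j) x) = wCat (sw ν γ j) x := by
  rw [swapHomeo_apply]
  have hνlen : ν.2.length ≤ (lw (n := n) (r := r) j).2.length := by rw [lw_len]; exact hνL
  have hγlen : γ.2.length ≤ (lw (n := n) (r := r) j).2.length := by rw [lw_len]; exact hγL
  by_cases hA : ν.1 = (lw j).1 ∧ ν.2 <+: (lw j).2
  · obtain ⟨w, hw⟩ := hA.2
    have hWj : lw j = wApp ν w := Prod.ext hA.1.symm hw.symm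
    have hdrop : (lw (n := n) (r := r) j).2.drop ν.2.length = w := by
      rw [← hw, List.drop_left]
    rw [sw, if_pos hA, hdrop, hWj, wCat_wApp, swapFun_wCat_left, wCat_wApp]
  · by_cases hB : γ.1 = (lw j).1 ∧ γ.2 <+: (lw j).2
    · obtain ⟨w, hw⟩ := hB.2
      have hWj : lw j = wApp γ w := Prod.ext hB.1.symm hw.symm
      have hdrop : (lw (n := n) (r := r) j).2.drop γ.2.length = w := by
        rw [← hw, List.drop_left]
      rw [sw, if_neg hA, if_pos hB, hdrop, hWj, wCat_wApp, swapFun_wCat_right hd, wCat_wApp]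
    · have h1 : wCat (lw j) x ∉ cone ν := fun hmem => hA ((wCat_mem_cone_iff hνlen x).1 hmem)
      have h2 : wCat (lw j) x ∉ cone γ := fun hmem => hB ((wCat_mem_cone_iff hγlen x).1 hmem)
      rw [sw, if_neg hA, if_neg hB, swapFun_of_not_mem h1 h2]

lemma isHigman_swapHomeo (hr : 0 < r) (hn : 0 < n) (ν γ : Word n r)
    (hd : ∀ p : CNR n r, p ∈ cone ν → p ∉ cone γ) :
    IsHigman (swapHomeo ν γ hd) := by
  classical
  set L := max ν.2.length γ.2.length with hL
  haveI : Nonempty (Fin r × (Fin L → Fin n)) := ⟨⟨⟨0, hr⟩, fun _ => ⟨0, hn⟩⟩⟩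
  let e := Fintype.equivFin (Fin r × (Fin L → Fin n))
  have hpart : ∀ p : CNR n r, ∃! i : Fin (Fintype.card (Fin r × (Fin L → Fin n))),
      p ∈ cone (lw (e.symm i)) := fun p => existsUnique_equiv e.symm (lw_partition p)
  have hact : ∀ (i : Fin (Fintype.card (Fin r × (Fin L → Fin n)))) (x : Cn n),
      swapHomeo ν γ hd (wCat (lw (e.symm i)) x) = wCat (sw ν γ (e.symm i)) x :=
    fun i x => swap_action ν γ hd (le_max_left _ _) (le_max_right _ _) _ x
  exact ⟨Fintype.card _, Fintype.card_pos, fun i => lw (e.symm i), fun i => sw ν γ (e.symm i),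
    hpart, partition_image _ _ _ hpart hact, hact⟩

end Aux

/-- If `h⁻¹ G_{n,r} h ⊆ G_{n,r}` then for all words `ν`, `η` with
`U_ν ∪ U_η ≠ 𝔠_{n,r}`, `h` acts on `U_ν` and `U_η` almost in the same fashion. -/
theorem conjugator_acts_almost_same_fashion (n r : ℕ) (hn : 2 ≤ n) (hr1 : 1 ≤ r)
    (hrn : r < n) (h : Homeo n r)
    (hconj : ∀ g : Homeo n r, IsHigman g → IsHigman (conjH h g))
    (ν η : Word n r) (hU : cone ν ∪ cone η ≠ Set.univ) :
    ∃ k : ℕ, ∀ χ : List (Fin n), k ≤ χ.length →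
      SameFashion h (wApp ν χ) (wApp η χ) := by
  classical
  have hn0 : 0 < n := by omega
  have hr0 : 0 < r := hr1
  obtain ⟨p, hp⟩ := (ne_univ_iff_exists_notMem _).1 hU
  set m0 := max ν.2.length η.2.length with hm0
  set γ : Word n r := cw p m0 with hγ
  -- `cone γ` is disjoint from `cone ν` and `cone η`
  have hdν : ∀ q : CNR n r, q ∈ cone ν → q ∉ cone γ := by
    intro q hq hqγ
    obtain ⟨h1, h2⟩ := mem_cone_cw_iff.1 hqγ
    refine hp (Or.inl ⟨h1 ▸ hq.1, fun i hi => ?_⟩)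
    rw [← h2 i (by omega)]
    exact hq.2 i hi
  have hdη : ∀ q : CNR n r, q ∈ cone η → q ∉ cone γ := by
    intro q hq hqγ
    obtain ⟨h1, h2⟩ := mem_cone_cw_iff.1 hqγ
    refine hp (Or.inr ⟨h1 ▸ hq.1, fun i hi => ?_⟩)
    rw [← h2 i (by omega)]
    exact hq.2 i hi
  set g₁ := swapHomeo ν γ hdν with hg₁
  set g₂ := swapHomeo η γ hdη with hg₂
  obtain ⟨k₁, -, νs₁, ηs₁, hpart₁, -, hact₁⟩ := hconj g₁ (isHigman_swapHomeo hr0 hn0 ν γ hdν)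
  obtain ⟨k₂, -, νs₂, ηs₂, hpart₂, -, hact₂⟩ := hconj g₂ (isHigman_swapHomeo hr0 hn0 η γ hdη)
  obtain ⟨m₁, hm₁⟩ := exists_uniform hn0 h νs₁ hpart₁
  obtain ⟨m₂, hm₂⟩ := exists_uniform hn0 h νs₂ hpart₂
  refine ⟨max m₁ m₂, fun χ hχ => ?_⟩
  obtain ⟨i, hi⟩ := hm₁ (wApp ν χ)
    (by simp only [wApp, List.length_append]; omega)
  obtain ⟨j, hj⟩ := hm₂ (wApp η χ)
    (by simp only [wApp, List.length_append]; omega)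
  set f : Cn n → Cn n := fun x => tl (νs₁ i).2.length (h (wCat (wApp ν χ) x)).2 with hf
  set f' : Cn n → Cn n := fun x => tl (νs₂ j).2.length (h (wCat (wApp η χ) x)).2 with hf'
  have hA : ∀ x, h (wCat (wApp ν χ) x) = wCat (νs₁ i) (f x) :=
    fun x => eq_wCat_of_mem_cone (hi x)
  have hB : ∀ x, h (wCat (wApp η χ) x) = wCat (νs₂ j) (f' x) :=
    fun x => eq_wCat_of_mem_cone (hj x)
  have hC : ∀ x, h (wCat (wApp γ χ) x) = wCat (ηs₁ i) (f x) := by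
    intro x
    have hgx : g₁ (wCat (wApp ν χ) x) = wCat (wApp γ χ) x := by
      rw [wCat_wApp, wCat_wApp, hg₁, swapHomeo_apply, swapFun_wCat_left]
    have hcj : conjH h g₁ (h (wCat (wApp ν χ) x)) = h (g₁ (wCat (wApp ν χ) x)) := by
      simp [conjH]
    calc h (wCat (wApp γ χ) x) = h (g₁ (wCat (wApp ν χ) x)) := by rw [hgx]
      _ = conjH h g₁ (h (wCat (wApp ν χ) x)) := hcj.symm
      _ = conjH h g₁ (wCat (νs₁ i) (f x)) := by rw [hA x]
      _ = wCat (ηs₁ i) (f x) := hact₁ i (f x)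
  have hC' : ∀ x, h (wCat (wApp γ χ) x) = wCat (ηs₂ j) (f' x) := by
    intro x
    have hgx : g₂ (wCat (wApp η χ) x) = wCat (wApp γ χ) x := by
      rw [wCat_wApp, wCat_wApp, hg₂, swapHomeo_apply, swapFun_wCat_left]
    have hcj : conjH h g₂ (h (wCat (wApp η χ) x)) = h (g₂ (wCat (wApp η χ) x)) := by
      simp [conjH]
    calc h (wCat (wApp γ χ) x) = h (g₂ (wCat (wApp η χ) x)) := by rw [hgx]
      _ = conjH h g₂ (h (wCat (wApp η χ) x)) := hcj.symm
      _ = conjH h g₂ (wCat (νs₂ j) (f' x)) := by rw [hB x]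
      _ = wCat (ηs₂ j) (f' x) := hact₂ j (f' x)
  exact sameFashion_of_common h (wApp ν χ) (wApp η χ) (νs₁ i) (νs₂ j) (ηs₁ i) (ηs₂ j) f f'
    hA hB (fun x => (hC x).symm.trans (hC' x))

end HigmanAut
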